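/- arXiv:2005.14063 — 3 statements merged into one kernel-verified Lean document; each statement's English description precedes it below -/
import Mathlib

section
/- Let p, μ ∈ ℝ and ν > 0, and let X be a real random variable with Gaussian law N(μ, ν²). Then E[e^{pX} Φ(X)] = e^{pμ + p²ν²/2} · Φ((μ + pν²)/√(1 + ν²)). -/
open MeasureTheory ProbabilityTheory Real

open scoped NNReal ENNReal

/-- The standard normal cumulative distribution function
`Φ(x) = ∫_{−∞}^x e^{−t²/2}/√(2π) dt`. -/
noncomputable def stdNormalCDF (x : ℝ) : ℝ :=
  ∫ t in Set.Iic x, Real.exp (-t ^ 2 / 2) / Real.sqrt (2 * Real.pi)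

lemma pdf01_eq : (fun t : ℝ => Real.exp (-t ^ 2 / 2) / Real.sqrt (2 * Real.pi))
    = gaussianPDFReal 0 1 := by
  funext t
  simp [gaussianPDFReal, div_eq_inv_mul]

lemma stdNormalCDF_eq (x : ℝ) : stdNormalCDF x = ∫ t in Set.Iic x, gaussianPDFReal 0 1 t := by
  rw [stdNormalCDF, pdf01_eq]

lemma stdNormalCDF_nonneg (x : ℝ) : 0 ≤ stdNormalCDF x := by
  rw [stdNormalCDF_eq]
  exact setIntegral_nonneg measurableSet_Iic fun t _ => gaussianPDFReal_nonneg 0 1 t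

lemma stdNormalCDF_mono : Monotone stdNormalCDF := by
  intro a b hab
  rw [stdNormalCDF_eq, stdNormalCDF_eq]
  apply setIntegral_mono_set ((integrable_gaussianPDFReal 0 1).integrableOn)
    (ae_of_all _ fun t => gaussianPDFReal_nonneg 0 1 t)
  exact HasSubset.Subset.eventuallyLE (Set.Iic_subset_Iic.mpr hab)

lemma stdNormalCDF_measurable : Measurable stdNormalCDF :=
  stdNormalCDF_mono.measurable

lemma ofReal_stdNormalCDF (x : ℝ) :
    ENNReal.ofReal (stdNormalCDF x) = gaussianReal 0 1 (Set.Iic x) := by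
  rw [gaussianReal_apply_eq_integral 0 one_ne_zero, stdNormalCDF_eq]

lemma gaussianReal_Iic (m a : ℝ) (V : ℝ≥0) (hV : V ≠ 0) :
    gaussianReal m V (Set.Iic a) = ENNReal.ofReal (stdNormalCDF ((a - m) / Real.sqrt V)) := by
  have hVpos : (0:ℝ) < V := by positivity
  have hs : (0:ℝ) < Real.sqrt V := Real.sqrt_pos.mpr hVpos
  have h1 : (gaussianReal 0 1).map (fun x => Real.sqrt V * x) = gaussianReal 0 V := by
    rw [gaussianReal_map_const_mul]
    congr 1
    · ring
    · ext
      simp [Real.sq_sqrt V.2]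
  have h2 : (gaussianReal 0 V).map (fun x => x + m) = gaussianReal m V := by
    rw [gaussianReal_map_add_const]
    congr 1
    ring
  have hmap : (gaussianReal 0 1).map (fun x => Real.sqrt V * x + m) = gaussianReal m V := by
    rw [← h2, ← h1, Measure.map_map (by fun_prop) (by fun_prop)]
    rfl
  rw [← hmap, Measure.map_apply (by fun_prop) measurableSet_Iic]
  have : (fun x => Real.sqrt V * x + m) ⁻¹' Set.Iic a = Set.Iic ((a - m) / Real.sqrt V) := by
    ext x
    simp only [Set.mem_preimage, Set.mem_Iic]
    rw [le_div_iff₀ hs, mul_comm]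
    constructor <;> intro h <;> linarith
  rw [this, ofReal_stdNormalCDF]

lemma pdf_symm (m z : ℝ) (V : ℝ≥0) : gaussianPDFReal m V (-z) = gaussianPDFReal (-m) V z := by
  simp only [gaussianPDFReal]
  ring_nf

lemma tilt (p m x : ℝ) (V : ℝ≥0) (hV : V ≠ 0) :
    Real.exp (p * x) * gaussianPDFReal m V x
      = Real.exp (p * m + p ^ 2 * V / 2) * gaussianPDFReal (m + p * V) V x := by
  have hVpos : (0:ℝ) < V := by positivity
  simp only [gaussianPDFReal]
  have key : rexp (p*x) * rexp (-(x-m)^2/(2*(V:ℝ)))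
      = rexp (p*m+p^2*(V:ℝ)/2) * rexp (-(x-(m+p*(V:ℝ)))^2/(2*(V:ℝ))) := by
    rw [← Real.exp_add, ← Real.exp_add]
    congr 1
    field_simp
    ring
  linear_combination (√(2*π*(V:ℝ)))⁻¹ * key

lemma pdf_prod (m z x : ℝ) (V : ℝ≥0) (hV : V ≠ 0) :
    gaussianPDFReal 0 1 (z + x) * gaussianPDFReal m V x
      = gaussianPDFReal m (1 + V) (-z)
        * gaussianPDFReal ((m - z * V) / (1 + V)) (V / (1 + V)) x := by
  have hVpos : (0:ℝ) < V := by positivity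
  have h1V : (0:ℝ) < 1 + V := by positivity
  simp only [gaussianPDFReal, NNReal.coe_add, NNReal.coe_one, NNReal.coe_div]
  have hc1 : √(2*π*(1:ℝ)) * √(2*π*(V:ℝ)) = √(2*π*(1+(V:ℝ))) * √(2*π*((V:ℝ)/(1+(V:ℝ)))) := by
    rw [← Real.sqrt_mul (by positivity), ← Real.sqrt_mul (by positivity)]
    congr 1
    field_simp
  have hexp : (-(z+x-0)^2/(2*(1:ℝ))) + (-(x-m)^2/(2*(V:ℝ)))
      = (-(-z-m)^2/(2*(1+(V:ℝ)))) + (-(x-(m - z * (V:ℝ)) / (1+(V:ℝ)))^2/(2*((V:ℝ)/(1+(V:ℝ))))) := by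
    field_simp
    ring
  have lhs_eq : (√(2*π*(1:ℝ)))⁻¹ * rexp (-(z+x-0)^2/(2*(1:ℝ)))
        * ((√(2*π*(V:ℝ)))⁻¹ * rexp (-(x-m)^2/(2*(V:ℝ))))
      = (√(2*π*(1:ℝ)) * √(2*π*(V:ℝ)))⁻¹
        * rexp ((-(z+x-0)^2/(2*(1:ℝ))) + (-(x-m)^2/(2*(V:ℝ)))) := by
    rw [Real.exp_add, mul_inv]; ring
  have rhs_eq : (√(2*π*(1+(V:ℝ))))⁻¹ * rexp (-(-z-m)^2/(2*(1+(V:ℝ))))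
        * ((√(2*π*((V:ℝ)/(1+(V:ℝ)))))⁻¹ * rexp (-(x-(m - z * (V:ℝ)) / (1+(V:ℝ)))^2/(2*((V:ℝ)/(1+(V:ℝ))))))
      = (√(2*π*(1+(V:ℝ))) * √(2*π*((V:ℝ)/(1+(V:ℝ)))))⁻¹
        * rexp ((-(-z-m)^2/(2*(1+(V:ℝ)))) + (-(x-(m - z * (V:ℝ)) / (1+(V:ℝ)))^2/(2*((V:ℝ)/(1+(V:ℝ)))))) := by
    rw [Real.exp_add, mul_inv]; ring
  calc (√(2*π*(1:ℝ)))⁻¹ * rexp (-(z+x-0)^2/(2*(1:ℝ)))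
        * ((√(2*π*(V:ℝ)))⁻¹ * rexp (-(x-m)^2/(2*(V:ℝ))))
      = (√(2*π*(1:ℝ)) * √(2*π*(V:ℝ)))⁻¹
        * rexp ((-(z+x-0)^2/(2*(1:ℝ))) + (-(x-m)^2/(2*(V:ℝ)))) := lhs_eq
    _ = (√(2*π*(1+(V:ℝ))) * √(2*π*((V:ℝ)/(1+(V:ℝ)))))⁻¹
        * rexp ((-(-z-m)^2/(2*(1+(V:ℝ)))) + (-(x-(m - z * (V:ℝ)) / (1+(V:ℝ)))^2/(2*((V:ℝ)/(1+(V:ℝ)))))) := by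
        rw [hc1, hexp]
    _ = _ := rhs_eq.symm

lemma core_lintegral (m : ℝ) (V : ℝ≥0) (hV : V ≠ 0) :
    ∫⁻ x, ENNReal.ofReal (stdNormalCDF x) ∂(gaussianReal m V)
      = ENNReal.ofReal (stdNormalCDF (m / Real.sqrt (1 + (V:ℝ)))) := by
  have h1V : (1 + V : ℝ≥0) ≠ 0 := by positivity
  have hu : (V / (1 + V) : ℝ≥0) ≠ 0 := by
    simp [div_eq_zero_iff, hV]
  set f : ℝ → ℝ → ℝ≥0∞ := fun x z =>
    (Set.Iic (0:ℝ)).indicator (fun _ => (1:ℝ≥0∞)) z * gaussianPDF 0 1 (z + x) with hf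
  have trans : ∀ x : ℝ, ENNReal.ofReal (stdNormalCDF x) = ∫⁻ z, f x z ∂volume := by
    intro x
    rw [ofReal_stdNormalCDF, gaussianReal_apply 0 one_ne_zero,
      ← lintegral_indicator measurableSet_Iic _,
      ← lintegral_add_right_eq_self (fun t => (Set.Iic x).indicator (gaussianPDF 0 1) t) x]
    refine lintegral_congr fun z => ?_
    by_cases h : z ≤ 0
    · simp [hf, Set.indicator_of_mem, h, Set.mem_Iic, add_comm,
        show z + x ≤ x by linarith]
    · simp [hf, Set.indicator_of_notMem, h, Set.mem_Iic,
        show ¬ (z + x ≤ x) by intro hh; exact h (by linarith)]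
  have hfm : AEMeasurable (Function.uncurry f) ((gaussianReal m V).prod volume) := by
    apply Measurable.aemeasurable
    apply Measurable.mul
    · exact (measurable_const.indicator measurableSet_Iic).comp measurable_snd
    · exact (measurable_gaussianPDF 0 1).comp (measurable_snd.add measurable_fst)
  calc ∫⁻ x, ENNReal.ofReal (stdNormalCDF x) ∂(gaussianReal m V)
      = ∫⁻ x, ∫⁻ z, f x z ∂volume ∂(gaussianReal m V) := lintegral_congr trans
    _ = ∫⁻ z, ∫⁻ x, f x z ∂(gaussianReal m V) ∂volume := lintegral_lintegral_swap hfm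
    _ = ∫⁻ z, (Set.Iic (0:ℝ)).indicator (fun _ => (1:ℝ≥0∞)) z
          * ENNReal.ofReal (gaussianPDFReal m (1 + V) (-z)) ∂volume := by
        refine lintegral_congr fun z => ?_
        rw [hf]
        simp only
        rw [lintegral_const_mul _ (show Measurable fun x : ℝ => gaussianPDF 0 1 (z + x) by exact (measurable_gaussianPDF 0 1).comp (by fun_prop))]
        congr 1
        rw [gaussianReal_of_var_ne_zero _ hV,
          lintegral_withDensity_eq_lintegral_mul _ (measurable_gaussianPDF m V)
            (show Measurable fun x : ℝ => gaussianPDF 0 1 (z + x) by exact (measurable_gaussianPDF 0 1).comp (by fun_prop))]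
        have : ∀ x : ℝ, (gaussianPDF m V * fun x => gaussianPDF 0 1 (z + x)) x
            = ENNReal.ofReal (gaussianPDFReal m (1 + V) (-z))
              * gaussianPDF ((m - z * V) / (1 + V)) (V / (1 + V)) x := by
          intro x
          simp only [Pi.mul_apply, gaussianPDF]
          rw [← ENNReal.ofReal_mul (gaussianPDFReal_nonneg _ _ _),
            ← ENNReal.ofReal_mul (gaussianPDFReal_nonneg _ _ _),
            mul_comm (gaussianPDFReal m V x), pdf_prod m z x V hV]
        rw [lintegral_congr this, lintegral_const_mul _ (measurable_gaussianPDF _ _),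
          lintegral_gaussianPDF_eq_one _ hu, mul_one]
    _ = ∫⁻ z in Set.Iic (0:ℝ), ENNReal.ofReal (gaussianPDFReal (-m) (1 + V) z) ∂volume := by
        rw [← lintegral_indicator measurableSet_Iic _]
        refine lintegral_congr fun z => ?_
        rw [pdf_symm]
        by_cases h : z ∈ Set.Iic (0:ℝ)
        · simp [Set.indicator_of_mem h]
        · simp [Set.indicator_of_notMem h]
    _ = gaussianReal (-m) (1 + V) (Set.Iic 0) := (gaussianReal_apply _ h1V _).symm
    _ = ENNReal.ofReal (stdNormalCDF (m / Real.sqrt (1 + (V:ℝ)))) := by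
        rw [gaussianReal_Iic _ _ _ h1V]
        norm_num

/-- **Lemma 1 (p ≠ 0 case included).** If `X ~ N(μ, ν²)` then
`E[e^{pX} Φ(X)] = e^{pμ + p²ν²/2} Φ((μ + pν²)/√(1 + ν²))`. -/
theorem stmt_0 {Ω : Type*} [MeasurableSpace Ω] (P : Measure Ω) [IsProbabilityMeasure P]
    (p μ ν : ℝ) (hν : 0 < ν) (X : Ω → ℝ) (hX : Measurable X)
    (hlaw : P.map X = gaussianReal μ ⟨ν ^ 2, sq_nonneg ν⟩) :
    ∫ ω, Real.exp (p * X ω) * stdNormalCDF (X ω) ∂P =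
      Real.exp (p * μ + p ^ 2 * ν ^ 2 / 2) *
        stdNormalCDF ((μ + p * ν ^ 2) / Real.sqrt (1 + ν ^ 2)) := by
  set v : ℝ≥0 := ⟨ν ^ 2, sq_nonneg ν⟩ with hvdef
  have hvr : (v : ℝ) = ν ^ 2 := rfl
  have hv : v ≠ 0 := by
    intro h
    have : (v : ℝ) = 0 := by rw [h]; rfl
    rw [hvr] at this
    nlinarith
  set fR : ℝ → ℝ := fun x => Real.exp (p * x) * stdNormalCDF x with hfR
  have hfRm : Measurable fR := (measurable_exp.comp (measurable_id.const_mul p)).mul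
    stdNormalCDF_measurable
  have hfR0 : ∀ x, 0 ≤ fR x := fun x =>
    mul_nonneg (Real.exp_pos _).le (stdNormalCDF_nonneg x)
  set m' : ℝ := μ + p * ν ^ 2 with hm'
  have h2 : ∫⁻ x, ENNReal.ofReal (fR x) ∂(gaussianReal μ v)
      = ENNReal.ofReal (Real.exp (p * μ + p ^ 2 * ν ^ 2 / 2)
          * stdNormalCDF ((μ + p * ν ^ 2) / Real.sqrt (1 + ν ^ 2))) := by
    calc ∫⁻ x, ENNReal.ofReal (fR x) ∂(gaussianReal μ v)
        = ∫⁻ x, gaussianPDF μ v x * ENNReal.ofReal (fR x) ∂volume := by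
          rw [gaussianReal_of_var_ne_zero _ hv,
            lintegral_withDensity_eq_lintegral_mul _ (measurable_gaussianPDF μ v)
              hfRm.ennreal_ofReal]
          rfl
      _ = ∫⁻ x, ENNReal.ofReal (Real.exp (p * μ + p ^ 2 * ν ^ 2 / 2))
            * (gaussianPDF m' v x * ENNReal.ofReal (stdNormalCDF x)) ∂volume := by
          refine lintegral_congr fun x => ?_
          simp only [gaussianPDF]
          rw [← ENNReal.ofReal_mul (gaussianPDFReal_nonneg _ _ _),
            ← ENNReal.ofReal_mul (gaussianPDFReal_nonneg _ _ _),
            ← ENNReal.ofReal_mul (Real.exp_pos _).le]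
          congr 1
          have ht := tilt p μ x v hv
          rw [hvr] at ht
          calc gaussianPDFReal μ v x * fR x
              = (Real.exp (p * x) * gaussianPDFReal μ v x) * stdNormalCDF x := by
                rw [hfR]; ring
            _ = (Real.exp (p * μ + p ^ 2 * ν ^ 2 / 2) * gaussianPDFReal m' v x)
                  * stdNormalCDF x := by rw [ht]
            _ = Real.exp (p * μ + p ^ 2 * ν ^ 2 / 2)
                  * (gaussianPDFReal m' v x * stdNormalCDF x) := by ring
      _ = ENNReal.ofReal (Real.exp (p * μ + p ^ 2 * ν ^ 2 / 2))
            * ∫⁻ x, ENNReal.ofReal (stdNormalCDF x) ∂(gaussianReal m' v) := by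
          rw [lintegral_const_mul _
            (show Measurable fun x => gaussianPDF m' v x * ENNReal.ofReal (stdNormalCDF x) from
              (measurable_gaussianPDF m' v).mul stdNormalCDF_measurable.ennreal_ofReal),
            gaussianReal_of_var_ne_zero _ hv,
            lintegral_withDensity_eq_lintegral_mul _ (measurable_gaussianPDF m' v)
              stdNormalCDF_measurable.ennreal_ofReal]
          rfl
      _ = ENNReal.ofReal (Real.exp (p * μ + p ^ 2 * ν ^ 2 / 2))
            * ENNReal.ofReal (stdNormalCDF (m' / Real.sqrt (1 + (v:ℝ)))) := by
          rw [core_lintegral m' v hv]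
      _ = ENNReal.ofReal (Real.exp (p * μ + p ^ 2 * ν ^ 2 / 2)
            * stdNormalCDF ((μ + p * ν ^ 2) / Real.sqrt (1 + ν ^ 2))) := by
          rw [← ENNReal.ofReal_mul (Real.exp_pos _).le, hvr, hm']
  have h1 : ∫ ω, Real.exp (p * X ω) * stdNormalCDF (X ω) ∂P
      = (∫⁻ x, ENNReal.ofReal (fR x) ∂(gaussianReal μ v)).toReal := by
    rw [← hlaw, lintegral_map hfRm.ennreal_ofReal hX,
      integral_eq_lintegral_of_nonneg_ae (ae_of_all _ fun ω => hfR0 (X ω))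
      ((hfRm.comp hX).aestronglyMeasurable)]
  rw [h1, h2, ENNReal.toReal_ofReal
    (mul_nonneg (Real.exp_pos _).le (stdNormalCDF_nonneg _))]
end

section
/- (Conditional Black–Scholes formula.) Let (Ω, F, P) be a probability space, G ⊆ F a sub-σ-algebra, M a G-measurable real random variable with e^M integrable, W a real random variable independent of G with standard Gaussian law N(0,1), Σ > 0 and κ ∈ ℝ. Then almost surely E[(e^{M + ΣW} − e^κ)^+ | G] = e^{M + Σ²/2} · Φ((M − κ + Σ²)/Σ) − e^κ · Φ((M − κ)/Σ). -/
open MeasureTheory ProbabilityTheory Real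

namespace BSaux

lemma pdf01 (t : ℝ) :
    gaussianPDFReal 0 1 t = Real.exp (-t ^ 2 / 2) / Real.sqrt (2 * Real.pi) := by
  simp only [gaussianPDFReal, NNReal.coe_one, mul_one, sub_zero]
  ring

lemma stdNormalCDF_eq (x : ℝ) :
    stdNormalCDF x = (gaussianReal 0 1 (Set.Iic x)).toReal := by
  rw [gaussianReal_apply_eq_integral 0 one_ne_zero, ENNReal.toReal_ofReal
    (setIntegral_nonneg measurableSet_Iic fun t _ => gaussianPDFReal_nonneg 0 1 t)]
  unfold stdNormalCDF
  exact setIntegral_congr_fun measurableSet_Iic fun t _ => (pdf01 t).symm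

lemma stdNormalCDF_mono : Monotone stdNormalCDF := by
  intro x y hxy
  rw [stdNormalCDF_eq, stdNormalCDF_eq]
  exact ENNReal.toReal_mono (measure_ne_top _ _)
    (measure_mono (Set.Iic_subset_Iic.2 hxy))

lemma measurable_stdNormalCDF : Measurable stdNormalCDF :=
  stdNormalCDF_mono.measurable

lemma stdNormalCDF_nonneg (x : ℝ) : 0 ≤ stdNormalCDF x := by
  rw [stdNormalCDF_eq]; exact ENNReal.toReal_nonneg

lemma stdNormalCDF_le_one (x : ℝ) : stdNormalCDF x ≤ 1 := by
  rw [stdNormalCDF_eq]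
  have h : gaussianReal 0 1 (Set.Iic x) ≤ 1 := prob_le_one
  exact (ENNReal.toReal_mono ENNReal.one_ne_top h).trans_eq ENNReal.toReal_one

lemma exp_mul_pdf (S w : ℝ) :
    Real.exp (S * w) * gaussianPDFReal 0 1 w = Real.exp (S ^ 2 / 2) * gaussianPDFReal S 1 w := by
  simp only [gaussianPDFReal, NNReal.coe_one, mul_one, sub_zero]
  rw [mul_left_comm, mul_left_comm (Real.exp (S ^ 2 / 2)), ← Real.exp_add, ← Real.exp_add]
  congr 2
  ring

lemma gauss_Ici_eq (a : ℝ) :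
    gaussianReal 0 1 (Set.Ici a) = gaussianReal 0 1 (Set.Iic (-a)) := by
  have h1 : (⟨(-1 : ℝ) ^ 2, sq_nonneg _⟩ : NNReal) = 1 := by ext; norm_num
  have h := gaussianReal_map_const_mul (μ := 0) (v := 1) (-1)
  replace h : Measure.map (fun x : ℝ => -1 * x) (gaussianReal 0 1) = gaussianReal 0 1 := by
    rw [h]
    congr 1
    · ring
    · ext; simp
  conv_lhs => rw [← h]
  rw [Measure.map_apply (by fun_prop) measurableSet_Ici]
  congr 1
  ext x
  simp only [Set.mem_preimage, Set.mem_Ici, Set.mem_Iic, neg_one_mul, le_neg]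

lemma gauss_shift (S c : ℝ) :
    gaussianReal S 1 (Set.Ici c) = gaussianReal 0 1 (Set.Ici (c - S)) := by
  have h := gaussianReal_map_add_const (μ := 0) (v := 1) S
  rw [zero_add] at h
  rw [← h, Measure.map_apply (measurable_add_const S) measurableSet_Ici]
  congr 1
  ext x
  simp only [Set.mem_preimage, Set.mem_Ici]
  constructor <;> intro <;> linarith

lemma gaussS_Ici (S c : ℝ) :
    (gaussianReal S 1 (Set.Ici c)).toReal = stdNormalCDF (S - c) := by
  rw [gauss_shift, gauss_Ici_eq, neg_sub, stdNormalCDF_eq]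

lemma setIntegral_pdf_Ici (m c : ℝ) :
    ∫ w in Set.Ici c, gaussianPDFReal m 1 w = (gaussianReal m 1 (Set.Ici c)).toReal := by
  rw [gaussianReal_apply_eq_integral m one_ne_zero, ENNReal.toReal_ofReal
    (setIntegral_nonneg measurableSet_Ici fun t _ => gaussianPDFReal_nonneg m 1 t)]

lemma gaussianPDF_eq_coe :
    gaussianPDF 0 1 = fun x => ((gaussianPDFReal 0 1 x).toNNReal : ENNReal) := rfl

/-- The Black–Scholes function. -/
noncomputable def bsFn (S κ m : ℝ) : ℝ :=
  Real.exp (m + S ^ 2 / 2) * stdNormalCDF ((m - κ + S ^ 2) / S) -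
    Real.exp κ * stdNormalCDF ((m - κ) / S)

lemma measurable_bsFn (S κ : ℝ) : Measurable (bsFn S κ) := by
  unfold bsFn
  exact ((Real.measurable_exp.comp (measurable_id.add_const _)).mul
      (measurable_stdNormalCDF.comp
        (((measurable_id.sub_const κ).add_const (S ^ 2)).div_const S))).sub
    (measurable_const.mul
      (measurable_stdNormalCDF.comp ((measurable_id.sub_const κ).div_const S)))

lemma abs_bsFn_le (S κ m : ℝ) :
    |bsFn S κ m| ≤ Real.exp m * Real.exp (S ^ 2 / 2) + Real.exp κ := by
  have h1 := stdNormalCDF_nonneg ((m - κ + S ^ 2) / S)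
  have h2 := stdNormalCDF_le_one ((m - κ + S ^ 2) / S)
  have h3 := stdNormalCDF_nonneg ((m - κ) / S)
  have h4 := stdNormalCDF_le_one ((m - κ) / S)
  have he : Real.exp (m + S ^ 2 / 2) = Real.exp m * Real.exp (S ^ 2 / 2) := Real.exp_add _ _
  have hp1 := Real.exp_pos (m + S ^ 2 / 2)
  have hp2 := Real.exp_pos κ
  rw [abs_le]
  unfold bsFn
  constructor
  · nlinarith
  · nlinarith

/-- The Black–Scholes Gaussian integral. -/
lemma integral_max_gauss (S : ℝ) (hS : 0 < S) (κ m : ℝ) :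
    ∫ w, max (Real.exp (m + S * w) - Real.exp κ) 0 ∂(gaussianReal 0 1) = bsFn S κ m := by
  set c : ℝ := (κ - m) / S with hc
  have hSc : S * c = κ - m := by
    rw [hc, mul_div_cancel₀ _ hS.ne']
  have hind : (fun w => max (Real.exp (m + S * w) - Real.exp κ) 0)
      = Set.indicator (Set.Ici c) (fun w => Real.exp (m + S * w) - Real.exp κ) := by
    funext w
    by_cases h : c ≤ w
    · rw [Set.indicator_of_mem (Set.mem_Ici.mpr h)]
      refine max_eq_left (sub_nonneg.2 (Real.exp_le_exp.2 ?_))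
      have := mul_le_mul_of_nonneg_left h hS.le
      linarith
    · rw [Set.indicator_of_notMem (by simpa using h)]
      push_neg at h
      refine max_eq_right (sub_nonpos.2 (Real.exp_le_exp.2 ?_))
      have := mul_le_mul_of_nonneg_left h.le hS.le
      linarith
  rw [hind, integral_indicator measurableSet_Ici,
    gaussianReal_of_var_ne_zero 0 one_ne_zero, gaussianPDF_eq_coe,
    setIntegral_withDensity_eq_setIntegral_smul
      (measurable_gaussianPDFReal 0 1).real_toNNReal _ measurableSet_Ici]
  have hsmul : ∀ w : ℝ, (gaussianPDFReal 0 1 w).toNNReal • (Real.exp (m + S * w) - Real.exp κ)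
      = Real.exp (m + S ^ 2 / 2) * gaussianPDFReal S 1 w
        - Real.exp κ * gaussianPDFReal 0 1 w := by
    intro w
    simp only [NNReal.smul_def, Real.coe_toNNReal _ (gaussianPDFReal_nonneg 0 1 w),
      smul_eq_mul]
    have h2 := exp_mul_pdf S w
    have h3 : Real.exp (m + S * w) = Real.exp m * Real.exp (S * w) := Real.exp_add _ _
    have h4 : Real.exp (m + S ^ 2 / 2) = Real.exp m * Real.exp (S ^ 2 / 2) := Real.exp_add _ _
    rw [h3, h4]
    linear_combination Real.exp m * h2
  simp_rw [hsmul]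
  rw [integral_sub ((integrable_gaussianPDFReal S 1).const_mul _).integrableOn
      ((integrable_gaussianPDFReal 0 1).const_mul _).integrableOn,
    integral_const_mul, integral_const_mul, setIntegral_pdf_Ici, setIntegral_pdf_Ici,
    gaussS_Ici, gauss_Ici_eq, ← stdNormalCDF_eq]
  have h5 : S - c = (m - κ + S ^ 2) / S := by
    rw [hc]
    field_simp
    ring
  have h6 : -c = (m - κ) / S := by
    rw [hc, ← neg_div, neg_sub]
  rw [h5, h6, bsFn]

end BSaux

/-- **Conditional Black–Scholes formula.** If `M` is `G`-measurable with `e^M` integrable,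
`W` is independent of `G` with standard Gaussian law `N(0,1)`, `S > 0` (playing the role
of Σ) and `κ ∈ ℝ`, then almost surely
`E[(e^{M + SW} − e^κ)^+ | G] = e^{M + S²/2} Φ((M − κ + S²)/S) − e^κ Φ((M − κ)/S)`. -/
theorem stmt_4 {Ω : Type*} {F : MeasurableSpace Ω} (P : Measure Ω) [IsProbabilityMeasure P]
    (G : MeasurableSpace Ω) (hG : G ≤ F)
    (M : Ω → ℝ) (hM : Measurable[G] M) (hMint : Integrable (fun ω => Real.exp (M ω)) P)
    (W : Ω → ℝ) (hW : Measurable[F] W)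
    (hindep : Indep (MeasurableSpace.comap W inferInstance) G P)
    (hlaw : @Measure.map Ω ℝ F _ W P = gaussianReal 0 1)
    (S : ℝ) (hS : 0 < S) (κ : ℝ) :
    P[fun ω => max (Real.exp (M ω + S * W ω) - Real.exp κ) 0 | G] =ᵐ[P]
      fun ω => Real.exp (M ω + S ^ 2 / 2) * stdNormalCDF ((M ω - κ + S ^ 2) / S) -
        Real.exp κ * stdNormalCDF ((M ω - κ) / S) := by
  classical
  letI : MeasurableSpace Ω := F
  have hMF : Measurable[F] M := hM.mono hG le_rfl
  -- integrability of `exp (S * W)`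
  have hexpSW_int : Integrable (fun ω => Real.exp (S * W ω)) P := by
    have h1 : Integrable (fun x : ℝ => Real.exp (S * x)) (gaussianReal 0 1) := by
      rw [gaussianReal_of_var_ne_zero 0 one_ne_zero, BSaux.gaussianPDF_eq_coe,
        integrable_withDensity_iff_integrable_smul
          (measurable_gaussianPDFReal 0 1).real_toNNReal]
      have heq : (fun x : ℝ => (gaussianPDFReal 0 1 x).toNNReal • Real.exp (S * x))
          = fun x => Real.exp (S ^ 2 / 2) * gaussianPDFReal S 1 x := by
        funext x
        simp only [NNReal.smul_def, Real.coe_toNNReal _ (gaussianPDFReal_nonneg 0 1 x),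
          smul_eq_mul]
        rw [mul_comm (gaussianPDFReal 0 1 x)]
        exact BSaux.exp_mul_pdf S x
      rw [heq]
      exact (integrable_gaussianPDFReal S 1).const_mul _
    have hmeas : Measurable fun x : ℝ => Real.exp (S * x) := by fun_prop
    exact (integrable_map_measure hmeas.aestronglyMeasurable hW.aemeasurable).mp
      (by rw [hlaw]; exact h1)
  -- independence of `exp (S * W)` and `exp M`
  have hIndepExp : IndepFun (fun ω => Real.exp (S * W ω)) (fun ω => Real.exp (M ω)) P := by
    rw [IndepFun_iff_Indep, Indep_iff]
    rw [Indep_iff] at hindep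
    intro t1 t2 ht1 ht2
    have hle1 : MeasurableSpace.comap (fun ω => Real.exp (S * W ω))
        inferInstance ≤ MeasurableSpace.comap W inferInstance := by
      rw [show (fun ω => Real.exp (S * W ω)) = (fun x : ℝ => Real.exp (S * x)) ∘ W from rfl,
        ← MeasurableSpace.comap_comp]
      exact MeasurableSpace.comap_mono
        (Real.measurable_exp.comp (measurable_id.const_mul S)).comap_le
    have hle2 : MeasurableSpace.comap (fun ω => Real.exp (M ω)) inferInstance ≤ G :=
      (Real.measurable_exp.comp hM).comap_le
    exact hindep t1 t2 (hle1 t1 ht1) (hle2 t2 ht2)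
  have hprod_int : Integrable (fun ω => Real.exp (S * W ω) * Real.exp (M ω)) P :=
    hIndepExp.integrable_mul hexpSW_int hMint
  have hF0meas : Measurable[F] (fun ω => max (Real.exp (M ω + S * W ω) - Real.exp κ) 0) :=
    ((Real.measurable_exp.comp (hMF.add (hW.const_mul S))).sub_const _).max measurable_const
  have hF0int : Integrable (fun ω => max (Real.exp (M ω + S * W ω) - Real.exp κ) 0) P := by
    refine hprod_int.mono hF0meas.aestronglyMeasurable (Filter.Eventually.of_forall fun ω => ?_)
    rw [Real.norm_eq_abs, Real.norm_eq_abs, abs_of_nonneg (le_max_right _ _),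
      abs_of_nonneg (by positivity)]
    refine max_le ?_ (by positivity)
    have he : Real.exp (M ω + S * W ω) = Real.exp (S * W ω) * Real.exp (M ω) := by
      rw [← Real.exp_add, add_comm]
    have := Real.exp_pos κ
    linarith
  -- integrability of `bsFn S κ ∘ M`
  have hgM_int : Integrable (fun ω => BSaux.bsFn S κ (M ω)) P := by
    refine ((hMint.mul_const (Real.exp (S ^ 2 / 2))).add
      (integrable_const (Real.exp κ))).mono
      (((BSaux.measurable_bsFn S κ).comp hMF).aestronglyMeasurable)
      (Filter.Eventually.of_forall fun ω => ?_)
    rw [Real.norm_eq_abs, Real.norm_eq_abs]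
    refine (BSaux.abs_bsFn_le S κ (M ω)).trans (le_abs_self _)
  haveI : IsFiniteMeasure (P.trim hG) := by
    constructor
    rw [trim_measurableSet_eq hG MeasurableSet.univ]
    exact measure_lt_top P _
  refine (ae_eq_condExp_of_forall_setIntegral_eq hG hF0int
    (fun s _ _ => hgM_int.integrableOn)
    (fun s hs _ => ?_)
    (StronglyMeasurable.aestronglyMeasurable
      (Measurable.stronglyMeasurable ((BSaux.measurable_bsFn S κ).comp hM)))).symm
  -- the set-integral identity
  set Y : Ω → ℝ × ℝ := fun ω => (M ω, s.indicator (fun _ => (1 : ℝ)) ω) with hY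
  have hYG : Measurable[G] Y := hM.prodMk (measurable_const.indicator hs)
  have hYF : Measurable[F] Y := hYG.mono hG le_rfl
  have hYW : IndepFun Y W P := by
    rw [IndepFun_iff_Indep, Indep_iff]
    rw [Indep_iff] at hindep
    intro t1 t2 ht1 ht2
    rw [Set.inter_comm, mul_comm]
    exact hindep t2 t1 ht2 (measurable_iff_comap_le.mp hYG t1 ht1)
  have hpair : AEMeasurable (fun ω => (Y ω, W ω)) P := (hYF.prodMk hW).aemeasurable
  have hmap : P.map (fun ω => (Y ω, W ω)) = (P.map Y).prod (P.map W) :=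
    (indepFun_iff_map_prod_eq_prod_map_map hYF.aemeasurable hW.aemeasurable).mp hYW
  set H : (ℝ × ℝ) × ℝ → ℝ :=
    fun p => p.1.2 * max (Real.exp (p.1.1 + S * p.2) - Real.exp κ) 0 with hH
  have hHcont : Continuous H :=
    (continuous_fst.snd).mul
      (((Real.continuous_exp.comp ((continuous_fst.fst).add
        (continuous_const.mul continuous_snd))).sub continuous_const).max continuous_const)
  have hHm : Measurable H := hHcont.measurable
  have hcomp : (fun ω => H (Y ω, W ω)) =
      fun ω => s.indicator (fun ω' => max (Real.exp (M ω' + S * W ω') - Real.exp κ) 0) ω := by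
    funext ω
    by_cases hω : ω ∈ s
    · simp [hH, hY, Set.indicator_of_mem hω]
    · simp [hH, hY, Set.indicator_of_notMem hω]
  have hHint : Integrable H ((P.map Y).prod (P.map W)) := by
    rw [← hmap]
    refine (integrable_map_measure hHm.aestronglyMeasurable hpair).mpr ?_
    show Integrable (fun ω => H (Y ω, W ω)) P
    rw [hcomp]
    exact hF0int.indicator (hG s hs)
  calc ∫ x in s, BSaux.bsFn S κ (M x) ∂P
      = ∫ x, s.indicator (fun ω => BSaux.bsFn S κ (M ω)) x ∂P :=
        (integral_indicator (hG s hs)).symm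
    _ = ∫ x, (Y x).2 * BSaux.bsFn S κ ((Y x).1) ∂P := by
        congr 1
        funext x
        by_cases hx : x ∈ s <;>
          simp [hY, Set.indicator_of_mem, Set.indicator_of_notMem, hx]
    _ = ∫ y : ℝ × ℝ, y.2 * BSaux.bsFn S κ y.1 ∂(P.map Y) :=
        (integral_map hYF.aemeasurable
          ((measurable_snd.mul
            ((BSaux.measurable_bsFn S κ).comp measurable_fst)).aestronglyMeasurable)).symm
    _ = ∫ y : ℝ × ℝ, ∫ w, H (y, w) ∂(P.map W) ∂(P.map Y) := by
        refine integral_congr_ae (Filter.Eventually.of_forall fun y => ?_)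
        rw [hlaw]
        simp only [hH]
        rw [integral_const_mul, BSaux.integral_max_gauss S hS κ y.1]
    _ = ∫ z, H z ∂((P.map Y).prod (P.map W)) := (integral_prod H hHint).symm
    _ = ∫ x, H (Y x, W x) ∂P := by
        rw [← hmap]
        exact integral_map hpair hHm.aestronglyMeasurable
    _ = ∫ x in s, max (Real.exp (M x + S * W x) - Real.exp κ) 0 ∂P := by
        rw [hcomp, integral_indicator (hG s hs)]
end

section
/- Let (Ω, F, P) be a probability space, G ⊆ F a sub-σ-algebra, M a G-measurable real random variable, W a real random variable independent of G with standard Gaussian law N(0,1), and Σ > 0. Then for P-almost every ω, the conditional distribution of the random variable M + ΣW given G, evaluated at ω, equals the Gaussian measure N(M(ω), Σ²). -/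
open MeasureTheory ProbabilityTheory Real
open scoped ENNReal NNReal

/-- **Conditional law of `M + SW` given `G`.** Let `M` be `G`-measurable, `W` independent
of `G` with standard Gaussian law `N(0,1)` and `S > 0` (playing the role of Σ). If
`κ : Ω → Measure ℝ` is a `G`-measurable (probability) kernel such that for every Borel set
`A`, `ω ↦ κ(ω)(A)` is a version of `E[1_{M + SW ∈ A} | G]` (i.e. `κ` is the conditional
distribution of `M + SW` given `G`), then for `P`-almost every `ω`,
`κ(ω) = N(M(ω), S²)`. -/
theorem stmt_5 {Ω : Type*} {F : MeasurableSpace Ω} (P : Measure Ω) [IsProbabilityMeasure P]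
    (G : MeasurableSpace Ω) (hG : G ≤ F)
    (M : Ω → ℝ) (hM : Measurable[G] M)
    (W : Ω → ℝ) (hW : Measurable[F] W)
    (hindep : Indep (MeasurableSpace.comap W inferInstance) G P)
    (hlaw : @Measure.map Ω ℝ F _ W P = gaussianReal 0 1)
    (S : ℝ) (hS : 0 < S)
    (κ : Ω → Measure ℝ) (hκ_prob : ∀ ω, IsProbabilityMeasure (κ ω))
    (hκ_meas : ∀ A : Set ℝ, MeasurableSet A → Measurable[G] fun ω => κ ω A)
    (hκ_version : ∀ A : Set ℝ, MeasurableSet A →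
      (fun ω => (κ ω A).toReal) =ᵐ[P]
        P[fun ω => A.indicator (fun _ => (1 : ℝ)) (M ω + S * W ω) | G]) :
    ∀ᵐ ω ∂P, κ ω = gaussianReal (M ω) ⟨S ^ 2, sq_nonneg S⟩ := by
  classical
  letI _instF : MeasurableSpace Ω := F
  set ν : ℝ → Measure ℝ := fun m => gaussianReal m ⟨S ^ 2, sq_nonneg S⟩ with hνdef
  have hMF : Measurable[F] M := hM.mono hG le_rfl
  -- The pushforward of the standard Gaussian by `w ↦ m + S * w` is `N(m, S²)`.
  have hmap_gauss : ∀ m : ℝ, (gaussianReal 0 1).map (fun w => m + S * w) = ν m := by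
    intro m
    have hcomp : (fun w : ℝ => m + S * w) = (fun x => m + x) ∘ (fun w => S * w) := rfl
    rw [hνdef, hcomp, ← Measure.map_map (by fun_prop) (by fun_prop),
      gaussianReal_map_const_mul, gaussianReal_map_const_add]
    norm_num
    rfl
  have hν_apply : ∀ (A : Set ℝ), MeasurableSet A → ∀ m : ℝ,
      ν m A = gaussianReal 0 1 {w | m + S * w ∈ A} := by
    intro A hA m
    rw [← hmap_gauss m, Measure.map_apply (by fun_prop) hA]
    rfl
  have hν_meas : ∀ (A : Set ℝ), MeasurableSet A → Measurable fun m => ν m A := by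
    intro A hA
    have hset : MeasurableSet {p : ℝ × ℝ | p.1 + S * p.2 ∈ A} :=
      (measurable_fst.add (measurable_const.mul measurable_snd)) hA
    have h := measurable_measure_prodMk_left (ν := gaussianReal 0 1) hset
    have heq : (fun m => ν m A) = fun m => gaussianReal 0 1 {w | m + S * w ∈ A} :=
      funext (hν_apply A hA)
    rw [heq]
    simpa using h
  -- Key computation using independence.
  have key : ∀ (A : Set ℝ), MeasurableSet A → ∀ s : Set Ω, MeasurableSet[G] s →
      ∫⁻ ω in s, A.indicator (fun _ => (1 : ℝ≥0∞)) (M ω + S * W ω) ∂P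
        = ∫⁻ ω in s, ν (M ω) A ∂P := by
    intro A hA s hs
    set V : Ω → ℝ × ℝ := fun ω => (M ω, s.indicator (fun _ => (1 : ℝ)) ω) with hVdef
    have hVG : Measurable[G] V := hM.prodMk (measurable_const.indicator hs)
    have hVF : Measurable[F] V := hVG.mono hG le_rfl
    have hindepVW : IndepFun V W P := by
      rw [IndepFun_iff_Indep]
      exact indep_of_indep_of_le_left hindep.symm hVG.comap_le
    have hmapprod : P.map (fun ω => (V ω, W ω)) = (P.map V).prod (gaussianReal 0 1) := by
      rw [← hlaw]
      exact (indepFun_iff_map_prod_eq_prod_map_map hVF.aemeasurable hW.aemeasurable).mp hindepVW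
    set φ : (ℝ × ℝ) × ℝ → ℝ≥0∞ :=
      fun p => ENNReal.ofReal p.1.2 * A.indicator (fun _ => (1 : ℝ≥0∞)) (p.1.1 + S * p.2)
      with hφdef
    have hφmeas : Measurable φ := by
      apply Measurable.mul
      · exact ENNReal.measurable_ofReal.comp (measurable_snd.comp measurable_fst)
      · exact Measurable.indicator measurable_const
          (((measurable_fst.comp measurable_fst).add (measurable_const.mul measurable_snd)) hA)
    have hstep1 : ∀ h : Ω → ℝ≥0∞,
        ∫⁻ ω, ENNReal.ofReal (s.indicator (fun _ => (1 : ℝ)) ω) * h ω ∂P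
          = ∫⁻ ω in s, h ω ∂P := by
      intro h
      rw [← lintegral_indicator (hG _ hs)]
      congr 1
      funext ω
      by_cases hω : ω ∈ s <;> simp [hω]
    calc ∫⁻ ω in s, A.indicator (fun _ => (1 : ℝ≥0∞)) (M ω + S * W ω) ∂P
        = ∫⁻ ω, φ (V ω, W ω) ∂P := by
          rw [← hstep1 (fun ω => A.indicator (fun _ => (1 : ℝ≥0∞)) (M ω + S * W ω))]
      _ = ∫⁻ p, φ p ∂((P.map V).prod (gaussianReal 0 1)) := by
          rw [← hmapprod, lintegral_map hφmeas (hVF.prodMk hW)]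
      _ = ∫⁻ z, ENNReal.ofReal z.2 * ν z.1 A ∂(P.map V) := by
          rw [lintegral_prod _ hφmeas.aemeasurable]
          congr 1
          funext z
          rw [hφdef]
          simp only
          rw [lintegral_const_mul _ (by
            exact Measurable.indicator measurable_const
              ((measurable_const.add (measurable_const.mul measurable_id)) hA))]
          congr 1
          have hind : (fun w => A.indicator (fun _ => (1 : ℝ≥0∞)) (z.1 + S * w))
              = ((fun w : ℝ => z.1 + S * w) ⁻¹' A).indicator (fun _ => (1 : ℝ≥0∞)) := by
            funext w
            by_cases h : z.1 + S * w ∈ A <;> simp [h, Set.indicator]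
          rw [hind, lintegral_indicator ((by fun_prop : Measurable fun w : ℝ => z.1 + S * w) hA),
            setLIntegral_one, hν_apply A hA z.1]
          rfl
      _ = ∫⁻ ω, ENNReal.ofReal (s.indicator (fun _ => (1 : ℝ)) ω) * ν (M ω) A ∂P := by
          rw [lintegral_map (by
            exact (ENNReal.measurable_ofReal.comp measurable_snd).mul
              ((hν_meas A hA).comp measurable_fst)) hVF]
      _ = ∫⁻ ω in s, ν (M ω) A ∂P := hstep1 _
  -- The function `ω ↦ N(M ω, S²)(A)` is a version of the conditional expectation.
  haveI : IsFiniteMeasure (P.trim hG) := isFiniteMeasure_trim hG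
  have hcond : ∀ A : Set ℝ, MeasurableSet A →
      (fun ω => (ν (M ω) A).toReal) =ᵐ[P]
        P[fun ω => A.indicator (fun _ => (1 : ℝ)) (M ω + S * W ω) | G] := by
    intro A hA
    have hB : MeasurableSet[F] ((fun ω => M ω + S * W ω) ⁻¹' A) :=
      (hMF.add (measurable_const.mul hW)) hA
    have hfeq : (fun ω => A.indicator (fun _ => (1 : ℝ)) (M ω + S * W ω))
        = ((fun ω => M ω + S * W ω) ⁻¹' A).indicator (fun _ => (1 : ℝ)) := by
      funext ω
      by_cases h : M ω + S * W ω ∈ A <;> simp [h, Set.indicator]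
    have hgG : Measurable[G] fun ω => (ν (M ω) A).toReal :=
      ((hν_meas A hA).comp hM).ennreal_toReal
    have hgF : Measurable[F] fun ω => (ν (M ω) A).toReal := hgG.mono hG le_rfl
    have hgbdd : ∀ ω, ‖(ν (M ω) A).toReal‖ ≤ 1 := by
      intro ω
      haveI : IsProbabilityMeasure (ν (M ω)) := by
        exact instIsProbabilityMeasureGaussianReal _ _
      rw [Real.norm_eq_abs, abs_of_nonneg ENNReal.toReal_nonneg]
      calc (ν (M ω) A).toReal ≤ (1 : ℝ≥0∞).toReal :=
            ENNReal.toReal_mono (by simp) prob_le_one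
        _ = 1 := by simp
    have hgint : Integrable (fun ω => (ν (M ω) A).toReal) P :=
      Integrable.mono' (integrable_const 1) hgF.aestronglyMeasurable
        (Filter.Eventually.of_forall hgbdd)
    refine ae_eq_condExp_of_forall_setIntegral_eq hG ?_ (fun s _ _ => hgint.integrableOn)
      (fun s hs _ => ?_) hgG.stronglyMeasurable.aestronglyMeasurable
    · rw [hfeq]
      exact (integrable_const (1 : ℝ)).indicator hB
    · -- set integral equality
      have hlhs : ∫ ω in s, (ν (M ω) A).toReal ∂P = (∫⁻ ω in s, ν (M ω) A ∂P).toReal := by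
        refine integral_toReal (((hν_meas A hA).comp hMF).aemeasurable.restrict) ?_
        exact Filter.Eventually.of_forall fun ω => by
          haveI : IsProbabilityMeasure (ν (M ω)) := instIsProbabilityMeasureGaussianReal _ _
          exact measure_lt_top _ _
      have hrhs : ∫ ω in s, A.indicator (fun _ => (1 : ℝ)) (M ω + S * W ω) ∂P
          = (∫⁻ ω in s, A.indicator (fun _ => (1 : ℝ≥0∞)) (M ω + S * W ω) ∂P).toReal := by
        have hENN : (fun ω => A.indicator (fun _ => (1 : ℝ≥0∞)) (M ω + S * W ω))
            = ((fun ω => M ω + S * W ω) ⁻¹' A).indicator (fun _ => (1 : ℝ≥0∞)) := by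
          funext ω
          by_cases h : M ω + S * W ω ∈ A <;> simp [h, Set.indicator]
        rw [hfeq, hENN, integral_indicator_const (1 : ℝ) hB, lintegral_indicator hB, setLIntegral_one]
        simp
        rfl
      rw [hlhs, hrhs, key A hA s hs]
  -- Combine with the hypothesis that `κ` is a version of the conditional distribution.
  have hAE : ∀ A : Set ℝ, MeasurableSet A → ∀ᵐ ω ∂P, κ ω A = ν (M ω) A := by
    intro A hA
    filter_upwards [(hκ_version A hA).trans (hcond A hA).symm] with ω hω
    haveI := hκ_prob ω
    haveI : IsProbabilityMeasure (ν (M ω)) := by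
      exact instIsProbabilityMeasureGaussianReal _ _
    exact (ENNReal.toReal_eq_toReal_iff' (measure_ne_top _ _) (measure_ne_top _ _)).mp hω
  have huniv : ∀ᵐ ω ∂P, κ ω Set.univ = ν (M ω) Set.univ := hAE _ MeasurableSet.univ
  have hall : ∀ᵐ ω ∂P, ∀ ⦃t : Set ℝ⦄, MeasurableSet t → κ ω t = ν (M ω) t := by
    apply MeasurableSpace.ae_induction_on_inter Real.borel_eq_generateFrom_Iic_rat
      Real.isPiSystem_Iic_rat
    · exact Filter.Eventually.of_forall fun ω => by simp
    · simp only [Set.iUnion_singleton_eq_range, Set.mem_range, forall_exists_index,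
        forall_apply_eq_imp_iff]
      exact ae_all_iff.2 fun q => hAE _ measurableSet_Iic
    · filter_upwards [huniv] with ω hωuniv t ht heq
      haveI := hκ_prob ω
      haveI : IsProbabilityMeasure (ν (M ω)) := by
        exact instIsProbabilityMeasureGaussianReal _ _
      rw [measure_compl ht (measure_ne_top _ _), heq, hωuniv,
        measure_compl ht (measure_ne_top _ _)]
    · refine Filter.Eventually.of_forall fun ω f hdisj hf heq => ?_
      rw [measure_iUnion hdisj hf, measure_iUnion hdisj hf]
      exact tsum_congr heq
  filter_upwards [hall] with ω hω
  exact Measure.ext fun t ht => hω ht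
end
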